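/- arXiv:0705.3126 — 2 statements merged into one kernel-verified Lean document; each statement's English description precedes it below -/
import Mathlib

section
/- Let φ ∈ C_b^1(H) and define F_ε φ(x) = (φ(η(ε,x)) - φ(x))/ε and Fφ(x) = ⟨Dφ(x), F(x)⟩. Then F_ε φ → Fφ uniformly on H as ε → 0⁺. -/
open scoped RealInnerProductSpace

/-- For `φ ∈ C_b^1(H)`, the finite differences along the flow,
`F_ε φ (x) = (φ (η ε x) - φ x) / ε`, converge uniformly on `H` to
`F φ (x) = ⟪Dφ x, F x⟫` as `ε → 0⁺`. -/
theorem finite_difference_uniform_convergence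
    {H : Type*} [NormedAddCommGroup H] [InnerProductSpace ℝ H] [CompleteSpace H]
    [TopologicalSpace.SeparableSpace H]
    (F : H → H) (MF : ℝ) (hMF : ∀ x, ‖F x‖ ≤ MF)
    (DF : H → H →L[ℝ] H) (hDF : ∀ x, HasFDerivAt F (DF x) x)
    (hDFuc : UniformContinuous DF)
    (K : ℝ) (hK : ∀ x, ‖DF x‖ ≤ K)
    (η : ℝ → H → H)
    (hη0 : ∀ x, η 0 x = x)
    (hη : ∀ (t : ℝ) (x : H), HasDerivAt (fun s => η s x) (F (η t x)) t)
    (φ : H → ℝ) (Mφ : ℝ) (hMφ : ∀ x, |φ x| ≤ Mφ) (hφuc : UniformContinuous φ)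
    (Dφ : H → H) (hDφ : ∀ x, HasGradientAt φ (Dφ x) x)
    (hDφuc : UniformContinuous Dφ) (MDφ : ℝ) (hMDφ : ∀ x, ‖Dφ x‖ ≤ MDφ) :
    TendstoUniformly (fun (ε : ℝ) (x : H) => (φ (η ε x) - φ x) / ε)
      (fun x => ⟪Dφ x, F x⟫) (nhdsWithin 0 (Set.Ioi 0)) := by
  have hMF0 : 0 ≤ MF := le_trans (norm_nonneg _) (hMF 0)
  have hMDφ0 : 0 ≤ MDφ := le_trans (norm_nonneg _) (hMDφ 0)
  have hK0 : 0 ≤ K := le_trans (norm_nonneg _) (hK 0)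
  -- flow displacement bound
  have hflow : ∀ s : ℝ, 0 ≤ s → ∀ x, ‖η s x - x‖ ≤ MF * s := by
    intro s hs x
    have h := (convex_Icc (0:ℝ) s).norm_image_sub_le_of_norm_hasDerivWithin_le
      (f := fun t => η t x) (f' := fun t => F (η t x))
      (fun t _ => (hη t x).hasDerivWithinAt) (fun t _ => hMF _)
      (Set.left_mem_Icc.mpr hs) (Set.right_mem_Icc.mpr hs)
    simpa [hη0 x, abs_of_nonneg hs] using h
  -- F is K-Lipschitz
  have hFlip : ∀ a b : H, ‖F a - F b‖ ≤ K * ‖a - b‖ := by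
    intro a b
    exact (convex_univ (𝕜 := ℝ) (E := H)).norm_image_sub_le_of_norm_hasFDerivWithin_le
      (fun y _ => (hDF y).hasFDerivWithinAt) (fun y _ => hK y) trivial trivial
  -- chain rule
  have hchain : ∀ (x : H) (s : ℝ),
      HasDerivAt (fun t => φ (η t x)) (⟪Dφ (η s x), F (η s x)⟫) s := by
    intro x s
    have h := (hDφ (η s x)).hasFDerivAt.comp_hasDerivAt s (hη s x)
    simp only [InnerProductSpace.toDual_apply_apply] at h
    exact h
  rw [Metric.tendstoUniformly_iff]
  intro ε' hε'
  -- choose δ from uniform continuity of Dφ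
  obtain ⟨δ, hδ0, hδ⟩ := Metric.uniformContinuous_iff.mp hDφuc (ε' / (4 * (MF + 1)))
    (by positivity)
  set ε₀ : ℝ := min (δ / (MF + 1)) (ε' / (4 * ((MDφ * K + 1) * (MF + 1)))) with hε₀def
  have hε₀0 : 0 < ε₀ := lt_min (by positivity) (by positivity)
  filter_upwards [Ioo_mem_nhdsGT hε₀0] with ε hεmem x
  obtain ⟨hε0, hεlt⟩ := hεmem
  set c : ℝ := ⟪Dφ x, F x⟫ with hc
  -- derivative bound on [0, ε]
  have hderivbound : ∀ s ∈ Set.Icc (0:ℝ) ε,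
      ‖⟪Dφ (η s x), F (η s x)⟫ - c‖ ≤ ε' / 2 := by
    intro s hs
    set y := η s x with hy
    have hyx : ‖y - x‖ ≤ MF * ε := by
      calc ‖y - x‖ ≤ MF * s := hflow s hs.1 x
        _ ≤ MF * ε := by nlinarith [hs.2]
    have hyxδ : ‖y - x‖ < δ := by
      have h1 : MF * ε < MF * ε₀ + ε₀ := by nlinarith
      have h2 : MF * ε₀ + ε₀ = (MF + 1) * ε₀ := by ring
      have h3 : (MF + 1) * ε₀ ≤ (MF + 1) * (δ / (MF + 1)) := by
        apply mul_le_mul_of_nonneg_left (min_le_left _ _) (by linarith)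
      have h4 : (MF + 1) * (δ / (MF + 1)) = δ := by field_simp
      linarith
    have hDφd : ‖Dφ y - Dφ x‖ < ε' / (4 * (MF + 1)) := by
      have := hδ (show dist y x < δ by rwa [dist_eq_norm])
      rwa [dist_eq_norm] at this
    have key : ⟪Dφ y, F y⟫ - c = ⟪Dφ y - Dφ x, F y⟫ + ⟪Dφ x, F y - F x⟫ := by
      simp only [hc, inner_sub_left, inner_sub_right]; ring
    rw [Real.norm_eq_abs, key]
    have t1 : |⟪Dφ y - Dφ x, F y⟫| ≤ ε' / (4 * (MF + 1)) * MF := by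
      calc |⟪Dφ y - Dφ x, F y⟫| ≤ ‖Dφ y - Dφ x‖ * ‖F y‖ := abs_real_inner_le_norm _ _
        _ ≤ ε' / (4 * (MF + 1)) * MF := by
            apply mul_le_mul hDφd.le (hMF y) (norm_nonneg _) (by positivity)
    have t2 : |⟪Dφ x, F y - F x⟫| ≤ MDφ * (K * (MF * ε)) := by
      calc |⟪Dφ x, F y - F x⟫| ≤ ‖Dφ x‖ * ‖F y - F x‖ := abs_real_inner_le_norm _ _
        _ ≤ MDφ * (K * (MF * ε)) := by
            apply mul_le_mul (hMDφ x) _ (norm_nonneg _) hMDφ0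
            calc ‖F y - F x‖ ≤ K * ‖y - x‖ := hFlip y x
              _ ≤ K * (MF * ε) := by nlinarith
    have b1 : ε' / (4 * (MF + 1)) * MF ≤ ε' / 4 := by
      rw [div_mul_eq_mul_div, div_le_div_iff₀ (by positivity) (by norm_num)]
      nlinarith
    have b2 : MDφ * (K * (MF * ε)) ≤ ε' / 4 := by
      have hεle : ε ≤ ε' / (4 * ((MDφ * K + 1) * (MF + 1))) :=
        le_trans hεlt.le (min_le_right _ _)
      have h5 : MDφ * (K * (MF * ε)) ≤ (MDφ * K + 1) * (MF + 1) * ε := by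
        nlinarith [mul_nonneg (mul_nonneg hMDφ0 hK0) hε0.le, mul_nonneg hMF0 hε0.le, hε0.le]
      have hpos : (0:ℝ) < (MDφ * K + 1) * (MF + 1) := by positivity
      have h6 : (MDφ * K + 1) * (MF + 1) * ε ≤ ε' / 4 := by
        calc (MDφ * K + 1) * (MF + 1) * ε
            ≤ (MDφ * K + 1) * (MF + 1) * (ε' / (4 * ((MDφ * K + 1) * (MF + 1)))) :=
              mul_le_mul_of_nonneg_left hεle hpos.le
          _ = ε' / 4 := by field_simp
      linarith
    calc |⟪Dφ y - Dφ x, F y⟫ + ⟪Dφ x, F y - F x⟫|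
        ≤ |⟪Dφ y - Dφ x, F y⟫| + |⟪Dφ x, F y - F x⟫| := abs_add_le _ _
      _ ≤ ε' / 2 := by linarith
  -- mean value estimate for g t = φ (η t x) - t * c
  have hg : ∀ s ∈ Set.Icc (0:ℝ) ε,
      HasDerivWithinAt (fun t => φ (η t x) - t * c)
        (⟪Dφ (η s x), F (η s x)⟫ - c) (Set.Icc 0 ε) s := by
    intro s _
    have h := ((hchain x s).sub ((hasDerivAt_id s).mul_const c)).hasDerivWithinAt (s := Set.Icc 0 ε)
    simp only [one_mul] at h
    exact h
  have hmvt := (convex_Icc (0:ℝ) ε).norm_image_sub_le_of_norm_hasDerivWithin_le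
    hg hderivbound (Set.left_mem_Icc.mpr hε0.le) (Set.right_mem_Icc.mpr hε0.le)
  have hmvt' : |φ (η ε x) - ε * c - φ x| ≤ ε' / 2 * ε := by
    have : (fun t => φ (η t x) - t * c) ε - (fun t => φ (η t x) - t * c) 0
        = φ (η ε x) - ε * c - φ x := by simp [hη0 x]
    rw [this] at hmvt
    simpa [Real.norm_eq_abs, abs_of_pos hε0] using hmvt
  rw [dist_eq_norm, Real.norm_eq_abs]
  have heq : c - (φ (η ε x) - φ x) / ε = -((φ (η ε x) - ε * c - φ x) / ε) := by
    field_simp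
    ring
  rw [heq, abs_neg, abs_div, abs_of_pos hε0]
  have hfin : |φ (η ε x) - ε * c - φ x| / ε ≤ ε' / 2 := by
    rw [div_le_iff₀ hε0]; linarith
  linarith
end

section
/- Under Hypothesis (i)–(iv), for ε ∈ (0,1), λ > ω + (e^{εK}-1)/ε, and f ∈ C_b^1(H), the resolvent φ_ε = R(λ, N_ε) f satisfies the gradient estimate ‖Dφ_ε‖₀ ≤ (λ - ω - (e^{εK}-1)/ε)^{-1} ‖Df‖₀. -/
noncomputable section
open MeasureTheory Set Filter
open scoped Topology RealInnerProductSpace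

/-- `C_b(H)`: uniformly continuous and bounded. -/
def IsCb {H : Type*} [NormedAddCommGroup H] [InnerProductSpace ℝ H] (φ : H → ℝ) : Prop :=
  UniformContinuous φ ∧ ∃ C, ∀ x, |φ x| ≤ C

/-- `C_b^1(H)`: in `C_b(H)`, Fréchet differentiable with gradient `Dφ` uniformly
continuous and bounded. -/
def IsCb1 {H : Type*} [NormedAddCommGroup H] [InnerProductSpace ℝ H] [CompleteSpace H]
    (φ : H → ℝ) (Dφ : H → H) : Prop :=
  IsCb φ ∧ (∀ x, HasGradientAt φ (Dφ x) x) ∧ UniformContinuous Dφ ∧ ∃ C, ∀ x, ‖Dφ x‖ ≤ C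

/-- The Ornstein–Uhlenbeck semigroup `R_t φ (x) = ∫_H φ (e^{tA} x + y) N_{Q_t}(dy)`,
with `S t = e^{tA}` and `μ t = N_{Q_t}`. -/
def OUsg {H : Type*} [NormedAddCommGroup H] [InnerProductSpace ℝ H] [MeasurableSpace H]
    (S : ℝ → H →L[ℝ] H) (μ : ℝ → Measure H) (t : ℝ) (φ : H → ℝ) (x : H) : ℝ :=
  ∫ y, φ (S t x + y) ∂ μ t

set_option maxHeartbeats 1000000

private lemma lip_of_grad {H : Type*} [NormedAddCommGroup H] [InnerProductSpace ℝ H]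
    [CompleteSpace H] (g : H → ℝ) (Dg : H → H) (C : ℝ)
    (hg : ∀ x, HasGradientAt g (Dg x) x) (hC : ∀ x, ‖Dg x‖ ≤ C) :
    ∀ u v, |g u - g v| ≤ C * ‖u - v‖ := by
  intro u v
  have := Convex.norm_image_sub_le_of_norm_hasFDerivWithin_le
    (f := g) (f' := fun x => InnerProductSpace.toDual ℝ H (Dg x)) (C := C) (s := univ)
    (fun x _ => (hg x).hasFDerivAt.hasFDerivWithinAt)
    (fun x _ => by simpa using hC x) convex_univ (mem_univ v) (mem_univ u)
  simpa [Real.norm_eq_abs] using this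
/-- Under Hypothesis (i)–(iv), for `ε ∈ (0,1)`, `λ > ω + (e^{εK} - 1)/ε` and
`f ∈ C_b^1(H)`, the resolvent `φ_ε = R(λ, N_ε) f`, i.e. the solution in
`D(L) ∩ C_b^1(H)` of `λ φ_ε - L φ_ε - F_ε φ_ε = f`, satisfies the gradient
estimate `‖Dφ_ε‖₀ ≤ (λ - ω - (e^{εK} - 1)/ε)⁻¹ ‖Df‖₀`. -/
theorem resolvent_gradient_estimate
    {H : Type*} [NormedAddCommGroup H] [InnerProductSpace ℝ H] [CompleteSpace H]
    [SecondCountableTopology H] [MeasurableSpace H] [BorelSpace H]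
    -- Hypothesis (i): `S t = e^{tA}` a semigroup of type 𝒢(1, ω)
    (S : ℝ → H →L[ℝ] H) (ω : ℝ)
    (hS0 : S 0 = ContinuousLinearMap.id ℝ H)
    (hSsem : ∀ s t : ℝ, 0 ≤ s → 0 ≤ t → S (s + t) = (S s).comp (S t))
    (hSbound : ∀ t ≥ (0:ℝ), ‖S t‖ ≤ Real.exp (ω * t))
    -- Hypotheses (ii),(iii): `μ t = N_{Q_t}` Gaussian measures giving an OU semigroup
    (μ : ℝ → Measure H) (hμ : ∀ t, IsProbabilityMeasure (μ t))
    (hμ0 : μ 0 = Measure.dirac 0)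
    (hsem : ∀ s t : ℝ, 0 ≤ s → 0 ≤ t → ∀ φ : H → ℝ, IsCb φ → ∀ x,
      OUsg S μ (s + t) φ x = OUsg S μ s (fun z => OUsg S μ t φ z) x)
    (hcont : ∀ φ : H → ℝ, IsCb φ → ∀ x, ContinuousOn (fun t => OUsg S μ t φ x) (Ici 0))
    -- `(L, D(L))`: the weak (π-semigroup) generator of the OU semigroup
    (DL : Set (H → ℝ)) (L : (H → ℝ) → H → ℝ)
    (hDL : ∀ φ, φ ∈ DL ↔ (IsCb φ ∧ ∃ g, IsCb g ∧
      (∀ x, Tendsto (fun t => (OUsg S μ t φ x - φ x) / t) (𝓝[>] 0) (𝓝 (g x))) ∧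
      ∃ M, ∀ t ∈ Ioo (0:ℝ) 1, ∀ x, |(OUsg S μ t φ x - φ x) / t| ≤ M))
    (hLdef : ∀ φ ∈ DL, ∀ x,
      Tendsto (fun t => (OUsg S μ t φ x - φ x) / t) (𝓝[>] 0) (𝓝 (L φ x)))
    -- Hypothesis (iv): `F ∈ C_b^1(H;H)` with `K = sup ‖DF‖`
    (F : H → H) (MF : ℝ) (hMF : ∀ x, ‖F x‖ ≤ MF)
    (DF : H → H →L[ℝ] H) (hDF : ∀ x, HasFDerivAt F (DF x) x)
    (hDFuc : UniformContinuous DF) (K : ℝ) (hK : ∀ x, ‖DF x‖ ≤ K)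
    -- `η`: the flow of `η' = F ∘ η`
    (η : ℝ → H → H) (hη0 : ∀ x, η 0 x = x)
    (hη : ∀ (t : ℝ) (x : H), HasDerivAt (fun s => η s x) (F (η t x)) t)
    (ε : ℝ) (hε : ε ∈ Ioo (0:ℝ) 1)
    (lam : ℝ) (hlam : lam > ω + (Real.exp (ε * K) - 1) / ε)
    (f : H → ℝ) (Df : H → H) (hf : IsCb1 f Df)
    (φ : H → ℝ) (Dφ : H → H) (hφDL : φ ∈ DL) (hφ : IsCb1 φ Dφ)
    (hres : ∀ x, lam * φ x - L φ x - (φ (η ε x) - φ x) / ε = f x) :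
    ∀ Cf : ℝ, (∀ x, ‖Df x‖ ≤ Cf) →
      ∀ x, ‖Dφ x‖ ≤ (lam - ω - (Real.exp (ε * K) - 1) / ε)⁻¹ * Cf := by
  intro Cf hCf x₀
  obtain ⟨hε0, hε1⟩ := hε
  have hεne : ε ≠ 0 := ne_of_gt hε0
  obtain ⟨hφCb, hφgrad, hφDuc, Cφ, hCφ⟩ := hφ
  obtain ⟨hfCb, hfgrad, hfDuc, Cf2, hCf2⟩ := hf
  have hK0 : 0 ≤ K := le_trans (norm_nonneg _) (hK 0)
  have hCf0 : 0 ≤ Cf := le_trans (norm_nonneg _) (hCf 0)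
  have hCφ0 : 0 ≤ Cφ := le_trans (norm_nonneg _) (hCφ 0)
  -- abbreviations
  set lam' : ℝ := lam + 1/ε with hlam'
  set a : ℝ := lam' - ω with ha
  have hapos : 0 < a := by
    have h1 : (1:ℝ) ≤ Real.exp (ε * K) := by
      have : (0:ℝ) ≤ ε * K := mul_nonneg hε0.le hK0
      simpa using Real.exp_le_exp.2 this
    have h2 : 0 < Real.exp (ε * K) / ε := div_pos (Real.exp_pos _) hε0
    have h3 : (Real.exp (ε * K) - 1) / ε + 1/ε = Real.exp (ε * K)/ε := by field_simp; ring
    rw [ha, hlam']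
    linarith
  set c : ℝ := lam - ω - (Real.exp (ε * K) - 1) / ε with hcdef
  have hceq : c = a - Real.exp (ε * K) / ε := by
    rw [hcdef, ha, hlam']; field_simp; ring
  have hcpos : 0 < c := by rw [hcdef]; linarith [hlam]
  -- Lipschitz constants
  have hfLip : ∀ u v, |f u - f v| ≤ Cf * ‖u - v‖ := lip_of_grad f Df Cf hfgrad hCf
  have hφLipC : ∀ u v, |φ u - φ v| ≤ Cφ * ‖u - v‖ := lip_of_grad φ Dφ Cφ hφgrad hCφ
  -- the flow is exp(K ε)-Lipschitz
  have hFlip : LipschitzWith K.toNNReal F := by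
    apply LipschitzWith.of_dist_le_mul
    intro u v
    have := Convex.norm_image_sub_le_of_norm_hasFDerivWithin_le
      (f := F) (f' := DF) (C := K) (s := univ)
      (fun x _ => (hDF x).hasFDerivWithinAt)
      (fun x _ => hK x) convex_univ (mem_univ v) (mem_univ u)
    simpa [dist_eq_norm, Real.coe_toNNReal K hK0] using this
  have hηLip : ∀ u v : H, ‖η ε u - η ε v‖ ≤ Real.exp (ε * K) * ‖u - v‖ := by
    intro u v
    have := dist_le_of_trajectories_ODE (v := fun _ z => F z) (K := K.toNNReal)
      (f := fun t => η t u) (g := fun t => η t v) (a := 0) (b := ε) (δ := dist u v)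
      (fun _ => hFlip)
      (fun t _ => ((hη t u).continuousAt).continuousWithinAt)
      (fun t _ => (hη t u).hasDerivWithinAt)
      (fun t _ => ((hη t v).continuousAt).continuousWithinAt)
      (fun t _ => (hη t v).hasDerivWithinAt)
      (by simp [hη0]) ε ⟨hε0.le, le_refl ε⟩
    rw [Real.coe_toNNReal K hK0] at this
    calc ‖η ε u - η ε v‖ = dist (η ε u) (η ε v) := (dist_eq_norm _ _).symm
      _ ≤ dist u v * Real.exp (K * (ε - 0)) := this
      _ = Real.exp (ε * K) * ‖u - v‖ := by
          rw [dist_eq_norm]; ring_nf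
  -- the Lipschitz seminorm M of φ
  set SL : Set ℝ := {r | ∃ u v : H, r = |φ u - φ v| / ‖u - v‖} with hSL
  have hSLbdd : BddAbove SL := by
    refine ⟨Cφ, ?_⟩
    rintro r ⟨u, v, rfl⟩
    rcases eq_or_ne u v with rfl | huv
    · simp [hCφ0]
    · have hd : (0:ℝ) < ‖u - v‖ := by
        rw [norm_pos_iff, sub_ne_zero]; exact huv
      rw [div_le_iff₀ hd]
      exact hφLipC u v
  have hSLne : (0:ℝ) ∈ SL := ⟨0, 0, by simp⟩
  set M : ℝ := sSup SL with hM
  have hM0 : 0 ≤ M := le_csSup hSLbdd hSLne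
  have hφLip : ∀ u v, |φ u - φ v| ≤ M * ‖u - v‖ := by
    intro u v
    rcases eq_or_ne u v with rfl | huv
    · simp
    · have hd : (0:ℝ) < ‖u - v‖ := by rw [norm_pos_iff, sub_ne_zero]; exact huv
      have : |φ u - φ v| / ‖u - v‖ ≤ M := le_csSup hSLbdd ⟨u, v, rfl⟩
      calc |φ u - φ v| = |φ u - φ v| / ‖u - v‖ * ‖u - v‖ := by field_simp
        _ ≤ M * ‖u - v‖ := mul_le_mul_of_nonneg_right this hd.le
  -- L φ is in C_b, with a uniform bound on the difference quotients
  obtain ⟨-, g0, hg0Cb, hg0t, Mq, hMq⟩ := (hDL φ).1 hφDL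
  have hg0eq : ∀ z, g0 z = L φ z := fun z =>
    tendsto_nhds_unique (hg0t z) (hLdef φ hφDL z)
  have hLφCb : IsCb (L φ) := by
    have : g0 = L φ := funext hg0eq
    rwa [this] at hg0Cb
  -- basic integrability and bounds
  have hInt : ∀ χ : H → ℝ, IsCb χ → ∀ (t : ℝ) (w : H),
      Integrable (fun y => χ (w + y)) (μ t) := by
    intro χ hχ t w
    haveI := hμ t
    obtain ⟨hχu, Cχ, hCχ⟩ := hχ
    refine ⟨(hχu.continuous.comp (continuous_const.add continuous_id)).aestronglyMeasurable, ?_⟩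
    exact HasFiniteIntegral.of_bounded (C := Cχ)
      (Eventually.of_forall fun y => by simpa [Real.norm_eq_abs] using hCχ (w + y))
  have hOUbd : ∀ (χ : H → ℝ) (C : ℝ), (∀ z, |χ z| ≤ C) → ∀ (t : ℝ) (x : H),
      |OUsg S μ t χ x| ≤ C := by
    intro χ C hC t x
    haveI := hμ t
    have := norm_integral_le_of_norm_le_const (μ := μ t)
      (f := fun y => χ (S t x + y)) (C := C)
      (Eventually.of_forall fun y => by simpa [Real.norm_eq_abs] using hC (S t x + y))
    simpa [OUsg, Real.norm_eq_abs] using this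
  -- C_b is stable under the semigroup
  have hOUCb : ∀ χ : H → ℝ, IsCb χ → ∀ t : ℝ, IsCb (fun z => OUsg S μ t χ z) := by
    intro χ hχ t
    haveI := hμ t
    obtain ⟨hχu, Cχ, hCχ⟩ := id hχ
    constructor
    · rw [Metric.uniformContinuous_iff]
      intro e he
      obtain ⟨δ, hδ0, hδ⟩ := Metric.uniformContinuous_iff.1 hχu (e/2) (by linarith)
      refine ⟨δ / (‖S t‖ + 1), by positivity, fun {z w} hzw => ?_⟩
      have hkey : ∀ y : H, |χ (S t z + y) - χ (S t w + y)| ≤ e/2 := by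
        intro y
        have hd : dist (S t z + y) (S t w + y) < δ := by
          rw [dist_add_right, dist_eq_norm, ← map_sub]
          calc ‖S t (z - w)‖ ≤ ‖S t‖ * ‖z - w‖ := (S t).le_opNorm _
            _ ≤ (‖S t‖ + 1) * ‖z - w‖ := by
                apply mul_le_mul_of_nonneg_right (by linarith) (norm_nonneg _)
            _ < (‖S t‖ + 1) * (δ / (‖S t‖ + 1)) := by
                apply mul_lt_mul_of_pos_left _ (by positivity)
                rw [← dist_eq_norm]; exact hzw
            _ = δ := by field_simp
        have := hδ hd
        rw [Real.dist_eq] at this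
        exact this.le
      have hint : |∫ y, (χ (S t z + y) - χ (S t w + y)) ∂ μ t| ≤ e/2 := by
        have h2 := norm_integral_le_of_norm_le_const (μ := μ t) (C := e/2)
          (f := fun y => χ (S t z + y) - χ (S t w + y))
          (Eventually.of_forall fun y => by simpa [Real.norm_eq_abs] using hkey y)
        simpa [Real.norm_eq_abs] using h2
      calc dist (OUsg S μ t χ z) (OUsg S μ t χ w)
          = |∫ y, (χ (S t z + y) - χ (S t w + y)) ∂ μ t| := by
            rw [Real.dist_eq]
            simp only [OUsg]
            rw [← integral_sub (hInt χ hχ t (S t z)) (hInt χ hχ t (S t w))]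
        _ ≤ e/2 := hint
        _ < e := by linarith
    · exact ⟨Cχ, fun z => hOUbd χ Cχ hCχ t z⟩
  -- Lipschitz transfer through the semigroup
  have hOULip : ∀ (χ : H → ℝ), IsCb χ → ∀ Lχ : ℝ, 0 ≤ Lχ →
      (∀ p q, |χ p - χ q| ≤ Lχ * ‖p - q‖) → ∀ t ≥ (0:ℝ), ∀ u v : H,
      |OUsg S μ t χ u - OUsg S μ t χ v| ≤ Lχ * Real.exp (ω * t) * ‖u - v‖ := by
    intro χ hχ Lχ hLχ0 hLχ t ht u v
    haveI := hμ t
    have hkey : ∀ y : H, |χ (S t u + y) - χ (S t v + y)| ≤ Lχ * Real.exp (ω*t) * ‖u - v‖ := by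
      intro y
      calc |χ (S t u + y) - χ (S t v + y)| ≤ Lχ * ‖(S t u + y) - (S t v + y)‖ := hLχ _ _
        _ = Lχ * ‖S t (u - v)‖ := by
            rw [show (S t u + y) - (S t v + y) = S t (u - v) by rw [map_sub]; abel]
        _ ≤ Lχ * (Real.exp (ω*t) * ‖u - v‖) := by
            apply mul_le_mul_of_nonneg_left _ hLχ0
            calc ‖S t (u - v)‖ ≤ ‖S t‖ * ‖u - v‖ := (S t).le_opNorm _
              _ ≤ Real.exp (ω*t) * ‖u - v‖ :=
                  mul_le_mul_of_nonneg_right (hSbound t ht) (norm_nonneg _)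
        _ = Lχ * Real.exp (ω*t) * ‖u - v‖ := by ring
    have hint : |∫ y, (χ (S t u + y) - χ (S t v + y)) ∂ μ t|
        ≤ Lχ * Real.exp (ω*t) * ‖u - v‖ := by
      have h2 := norm_integral_le_of_norm_le_const (μ := μ t)
        (C := Lχ * Real.exp (ω*t) * ‖u - v‖)
        (f := fun y => χ (S t u + y) - χ (S t v + y))
        (Eventually.of_forall fun y => by simpa [Real.norm_eq_abs] using hkey y)
      simpa [Real.norm_eq_abs] using h2
    calc |OUsg S μ t χ u - OUsg S μ t χ v|
        = |∫ y, (χ (S t u + y) - χ (S t v + y)) ∂ μ t| := by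
          simp only [OUsg]
          rw [← integral_sub (hInt χ hχ t (S t u)) (hInt χ hχ t (S t v))]
      _ ≤ Lχ * Real.exp (ω*t) * ‖u - v‖ := hint
  -- the function ψ
  set ψ : H → ℝ := fun z => f z + φ (η ε z) / ε with hψdef
  have hηUC : UniformContinuous (fun z : H => η ε z) := by
    have : LipschitzWith (Real.exp (ε * K)).toNNReal (fun z : H => η ε z) := by
      apply LipschitzWith.of_dist_le_mul
      intro u v
      simpa [dist_eq_norm, Real.coe_toNNReal _ (Real.exp_pos (ε*K)).le] using hηLip u v
    exact this.uniformContinuous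
  have hψCb : IsCb ψ := by
    constructor
    · exact hfCb.1.add ((hφCb.1.comp hηUC).div_const' ε)
    · obtain ⟨Cφ', hCφ'⟩ := hφCb.2
      obtain ⟨Cf', hCf'⟩ := hfCb.2
      refine ⟨Cf' + Cφ'/ε, fun z => ?_⟩
      have h1 : |φ (η ε z) / ε| ≤ Cφ' / ε := by
        rw [abs_div, abs_of_pos hε0]
        exact div_le_div_of_nonneg_right (hCφ' _) hε0.le
      calc |f z + φ (η ε z) / ε| ≤ |f z| + |φ (η ε z) / ε| := abs_add_le _ _
        _ ≤ Cf' + Cφ'/ε := add_le_add (hCf' z) h1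
  set Lψ : ℝ := Cf + M * Real.exp (ε * K) / ε with hLψdef
  have hLψ0 : 0 ≤ Lψ := by
    have := (Real.exp_pos (ε * K)).le
    positivity
  have hψLip : ∀ p q, |ψ p - ψ q| ≤ Lψ * ‖p - q‖ := by
    intro p q
    have h1 : |φ (η ε p) - φ (η ε q)| ≤ M * (Real.exp (ε * K) * ‖p - q‖) :=
      le_trans (hφLip _ _) (mul_le_mul_of_nonneg_left (hηLip p q) hM0)
    have h2 : |φ (η ε p) / ε - φ (η ε q) / ε| ≤ M * Real.exp (ε * K) / ε * ‖p - q‖ := by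
      rw [div_sub_div_same, abs_div, abs_of_pos hε0, div_le_iff₀ hε0]
      calc |φ (η ε p) - φ (η ε q)| ≤ M * (Real.exp (ε * K) * ‖p - q‖) := h1
        _ = M * Real.exp (ε * K) / ε * ‖p - q‖ * ε := by field_simp
    calc |ψ p - ψ q| = |(f p - f q) + (φ (η ε p)/ε - φ (η ε q)/ε)| := by
          rw [hψdef]; ring_nf
      _ ≤ |f p - f q| + |φ (η ε p)/ε - φ (η ε q)/ε| := abs_add_le _ _
      _ ≤ Cf * ‖p - q‖ + M * Real.exp (ε * K) / ε * ‖p - q‖ := add_le_add (hfLip p q) h2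
      _ = Lψ * ‖p - q‖ := by rw [hLψdef]; ring
  -- the pointwise resolvent identity
  have hLrw : ∀ z, L φ z = lam' * φ z - ψ z := by
    intro z
    have h := hres z
    rw [sub_div] at h
    rw [hψdef, hlam']
    field_simp
    field_simp at h
    linarith
  -- linearity: OUsg of L φ
  have hOULφ : ∀ (t : ℝ) (x : H), OUsg S μ t (L φ) x
      = lam' * OUsg S μ t φ x - OUsg S μ t ψ x := by
    intro t x
    haveI := hμ t
    have h1 : (fun y => L φ (S t x + y)) = fun y => lam' * φ (S t x + y) - ψ (S t x + y) := by
      funext y; rw [hLrw]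
    rw [OUsg, h1, integral_sub ((hInt φ hφCb t (S t x)).const_mul lam') (hInt ψ hψCb t (S t x)),
      integral_const_mul]
    rfl
  -- right derivative of t ↦ OUsg t φ x
  have hder : ∀ (x : H) (t : ℝ), 0 ≤ t →
      HasDerivWithinAt (fun r => OUsg S μ r φ x) (OUsg S μ t (L φ) x) (Ici t) t := by
    intro x t ht
    rw [hasDerivWithinAt_iff_tendsto_slope, Ici_sdiff_left]
    have h1 : Tendsto (fun r : ℝ => r - t) (𝓝[>] t) (𝓝[>] (0:ℝ)) := by
      apply tendsto_nhdsWithin_of_tendsto_nhds_of_eventually_within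
      · have h2 : Tendsto (fun r : ℝ => r - t) (𝓝 t) (𝓝 (t - t)) :=
          (continuous_id.sub continuous_const).tendsto t
        rw [sub_self] at h2
        exact h2.mono_left nhdsWithin_le_nhds
      · filter_upwards [self_mem_nhdsWithin] with r hr
        simpa using sub_pos.2 (show t < r from hr)
    have hq : Tendsto (fun s : ℝ => ∫ y, ((OUsg S μ s φ (S t x + y) - φ (S t x + y))/s) ∂ μ t)
        (𝓝[>] (0:ℝ)) (𝓝 (OUsg S μ t (L φ) x)) := by
      haveI := hμ t
      have hmeas : ∀ᶠ s : ℝ in 𝓝[>] (0:ℝ), AEStronglyMeasurable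
          (fun y => (OUsg S μ s φ (S t x + y) - φ (S t x + y))/s) (μ t) := by
        apply Eventually.of_forall
        intro s
        have hc1 : Continuous fun y : H => OUsg S μ s φ (S t x + y) :=
          ((hOUCb φ hφCb s).1.continuous).comp (continuous_const.add continuous_id)
        have hc2 : Continuous fun y : H => φ (S t x + y) :=
          (hφCb.1.continuous).comp (continuous_const.add continuous_id)
        exact ((hc1.sub hc2).div_const s).aestronglyMeasurable
      have hbound : ∀ᶠ s : ℝ in 𝓝[>] (0:ℝ), ∀ᵐ y ∂ μ t,
          ‖(OUsg S μ s φ (S t x + y) - φ (S t x + y))/s‖ ≤ Mq := by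
        filter_upwards [Ioo_mem_nhdsGT (zero_lt_one)] with s hs
        exact Eventually.of_forall fun y => by
          rw [Real.norm_eq_abs]; exact hMq s hs (S t x + y)
      exact tendsto_integral_filter_of_dominated_convergence (fun _ => Mq) hmeas hbound
        (integrable_const _) (Eventually.of_forall fun y => hLdef φ hφDL (S t x + y))
    have heq : ∀ᶠ r : ℝ in 𝓝[>] t,
        (fun r : ℝ => ∫ y, ((OUsg S μ (r - t) φ (S t x + y) - φ (S t x + y))/(r - t)) ∂ μ t) r
        = slope (fun r => OUsg S μ r φ x) t r := by
      haveI := hμ t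
      filter_upwards [self_mem_nhdsWithin] with r hr
      have hrt : (0:ℝ) < r - t := sub_pos.2 hr
      have hsemr : OUsg S μ r φ x = OUsg S μ t (fun z => OUsg S μ (r - t) φ z) x := by
        have h3 := hsem t (r - t) ht hrt.le φ hφCb x
        rwa [show t + (r - t) = r by ring] at h3
      have hintsub : OUsg S μ t (fun z => OUsg S μ (r - t) φ z) x - OUsg S μ t φ x
          = ∫ y, (OUsg S μ (r - t) φ (S t x + y) - φ (S t x + y)) ∂ μ t := by
        simp only [OUsg]
        have hi1 : Integrable (fun y => OUsg S μ (r - t) φ (S t x + y)) (μ t) :=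
          hInt _ (hOUCb φ hφCb (r - t)) t (S t x)
        have hi2 : Integrable (fun y => φ (S t x + y)) (μ t) := hInt φ hφCb t (S t x)
        exact (integral_sub hi1 hi2).symm
      rw [slope_def_field, hsemr, hintsub, integral_div]
    exact Tendsto.congr' heq (hq.comp h1)
  -- OUsg at time 0
  have hOU0 : ∀ (χ : H → ℝ), IsCb χ → ∀ x : H, OUsg S μ 0 χ x = χ x := by
    intro χ hχ x
    rw [OUsg, hμ0, hS0]
    have hcont' : Continuous fun y : H => χ ((ContinuousLinearMap.id ℝ H) x + y) :=
      hχ.1.continuous.comp (continuous_const.add continuous_id)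
    rw [integral_dirac' _ _ hcont'.stronglyMeasurable]
    simp
  -- the per-pair comparison estimate
  set β : ℝ := Real.exp (-a) with hβdef
  have hβ1 : β < 1 := by
    rw [hβdef]; rw [Real.exp_lt_one_iff]; linarith
  have hβ0 : 0 < β := Real.exp_pos _
  have hpair : ∀ u v : H, φ u - φ v ≤ M * β * ‖u - v‖ + Lψ * ‖u - v‖ * (1 - β)/a := by
    intro u v
    set d : ℝ := ‖u - v‖ with hd
    set gf : ℝ → ℝ := fun t => OUsg S μ t φ u - OUsg S μ t φ v with hgf
    set Dψ : ℝ → ℝ := fun t => OUsg S μ t ψ u - OUsg S μ t ψ v with hDψ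
    set fneg : ℝ → ℝ := fun t => -(Real.exp (-lam' * t) * gf t) with hfneg
    set B : ℝ → ℝ := fun t => fneg 0 + Lψ * d * (1 - Real.exp ((ω - lam') * t))/a with hB
    have hgfcont : ContinuousOn gf (Icc (0:ℝ) 1) :=
      ((hcont φ hφCb u).sub (hcont φ hφCb v)).mono Icc_subset_Ici_self
    have hfnegcont : ContinuousOn fneg (Icc (0:ℝ) 1) := by
      apply ContinuousOn.neg
      exact (Continuous.continuousOn
        (Real.continuous_exp.comp (continuous_const.mul continuous_id))).mul hgfcont
    have hfneg' : ∀ t ∈ Ico (0:ℝ) 1,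
        HasDerivWithinAt fneg (Real.exp (-lam' * t) * Dψ t) (Ici t) t := by
      intro t ht
      have hg' : HasDerivWithinAt gf (lam' * gf t - Dψ t) (Ici t) t := by
        have h1 := (hder u t ht.1).sub (hder v t ht.1)
        have h2 : OUsg S μ t (L φ) u - OUsg S μ t (L φ) v = lam' * gf t - Dψ t := by
          rw [hOULφ t u, hOULφ t v]
          simp only [hgf, hDψ]
          ring
        rwa [h2] at h1
      have hexp : HasDerivWithinAt (fun r : ℝ => Real.exp (-lam' * r))
          (Real.exp (-lam' * t) * (-lam' * 1)) (Ici t) t :=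
        (((hasDerivAt_id t).const_mul (-lam')).exp).hasDerivWithinAt
      have hprod := hexp.mul hg'
      have hneg := hprod.neg
      have heq2 : -(Real.exp (-lam' * t) * (-lam' * 1) * gf t
          + Real.exp (-lam' * t) * (lam' * gf t - Dψ t))
          = Real.exp (-lam' * t) * Dψ t := by ring
      rw [heq2] at hneg
      exact hneg
    have hB' : ∀ t ∈ Ico (0:ℝ) 1,
        HasDerivWithinAt B (Lψ * d * Real.exp ((ω - lam') * t)) (Ici t) t := by
      intro t ht
      have h2 : HasDerivAt (fun r : ℝ => Real.exp ((ω - lam') * r))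
          (Real.exp ((ω - lam') * t) * ((ω - lam') * 1)) t :=
        ((hasDerivAt_id t).const_mul (ω - lam')).exp
      have h3 : HasDerivAt (fun r : ℝ => 1 - Real.exp ((ω - lam') * r))
          (-(Real.exp ((ω - lam') * t) * ((ω - lam') * 1))) t := h2.const_sub 1
      have h4 : HasDerivAt (fun r : ℝ => Lψ * d * (1 - Real.exp ((ω - lam') * r)))
          (Lψ * d * -(Real.exp ((ω - lam') * t) * ((ω - lam') * 1))) t := h3.const_mul (Lψ * d)
      have h5 : HasDerivAt (fun r : ℝ => fneg 0 + Lψ * d * (1 - Real.exp ((ω - lam') * r))/a)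
          (Lψ * d * -(Real.exp ((ω - lam') * t) * ((ω - lam') * 1))/a) t :=
        (h4.div_const a).const_add (fneg 0)
      have h6 : Lψ * d * -(Real.exp ((ω - lam') * t) * ((ω - lam') * 1))/a
          = Lψ * d * Real.exp ((ω - lam') * t) := by
        have hane : a ≠ 0 := ne_of_gt hapos
        rw [ha] at hane ⊢
        field_simp
        ring
      rw [h6] at h5
      exact h5.hasDerivWithinAt
    have haB : fneg 0 ≤ B 0 := by simp [hB]
    have hBcont : ContinuousOn B (Icc (0:ℝ) 1) := by
      apply Continuous.continuousOn
      rw [hB]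
      exact continuous_const.add ((continuous_const.mul (continuous_const.sub
        (Real.continuous_exp.comp (continuous_const.mul continuous_id)))).div_const a)
    have hbd : ∀ t ∈ Ico (0:ℝ) 1,
        Real.exp (-lam' * t) * Dψ t ≤ Lψ * d * Real.exp ((ω - lam') * t) := by
      intro t ht
      have h1 : |Dψ t| ≤ Lψ * Real.exp (ω*t) * d := hOULip ψ hψCb Lψ hLψ0 hψLip t ht.1 u v
      have h2 : Dψ t ≤ Lψ * Real.exp (ω*t) * d := le_trans (le_abs_self _) h1
      calc Real.exp (-lam' * t) * Dψ t
          ≤ Real.exp (-lam' * t) * (Lψ * Real.exp (ω*t) * d) :=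
            mul_le_mul_of_nonneg_left h2 (Real.exp_pos _).le
        _ = Lψ * d * (Real.exp (-lam' * t) * Real.exp (ω*t)) := by ring
        _ = Lψ * d * Real.exp ((ω - lam') * t) := by
            rw [← Real.exp_add, show -lam' * t + ω*t = (ω - lam') * t by ring]
    have hcomp := image_le_of_deriv_right_le_deriv_boundary hfnegcont hfneg' haB hBcont hB' hbd
    have h1 : fneg 1 ≤ B 1 := hcomp (right_mem_Icc.2 zero_le_one)
    have hgf0 : gf 0 = φ u - φ v := by
      simp only [hgf]
      rw [hOU0 φ hφCb u, hOU0 φ hφCb v]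
    have hfneg0 : fneg 0 = -(φ u - φ v) := by
      simp only [hfneg]
      rw [hgf0]
      simp
    have hexpβ : Real.exp ((ω - lam') * 1) = β := by
      rw [hβdef, show (ω - lam') * 1 = -a by rw [ha]; ring]
    have hgf1 : |gf 1| ≤ M * Real.exp (ω * 1) * d :=
      hOULip φ hφCb M hM0 hφLip 1 zero_le_one u v
    have hkey : Real.exp (-lam' * 1) * gf 1 ≤ M * β * d := by
      have h2 : gf 1 ≤ M * Real.exp (ω * 1) * d := le_trans (le_abs_self _) hgf1
      calc Real.exp (-lam' * 1) * gf 1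
          ≤ Real.exp (-lam' * 1) * (M * Real.exp (ω * 1) * d) :=
            mul_le_mul_of_nonneg_left h2 (Real.exp_pos _).le
        _ = M * (Real.exp (-lam' * 1) * Real.exp (ω * 1)) * d := by ring
        _ = M * β * d := by
            rw [← Real.exp_add, show -lam' * 1 + ω * 1 = -a by rw [ha]; ring, hβdef]
    have hh : -(Real.exp (-lam' * 1) * gf 1) ≤ -(φ u - φ v) + Lψ * d * (1 - β)/a := by
      have h2 : fneg 1 = -(Real.exp (-lam' * 1) * gf 1) := by simp only [hfneg]
      have h3 : B 1 = fneg 0 + Lψ * d * (1 - Real.exp ((ω - lam') * 1))/a := by simp only [hB]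
      rw [h2, h3, hfneg0, hexpβ] at h1
      exact h1
    have hgoal : φ u - φ v ≤ M * β * d + Lψ * d * (1 - β)/a := by
      clear_value gf fneg B Dψ M a lam' β d Lψ
      linarith
    calc φ u - φ v ≤ M * β * d + Lψ * d * (1 - β)/a := hgoal
      _ = M * β * d + Lψ * d * (1 - β)/a := rfl
  -- the fixed-point inequality for M
  have hMle : M * c ≤ Cf := by
    have hMfix : M ≤ M * β + Lψ * (1 - β)/a := by
      apply csSup_le ⟨0, hSLne⟩
      rintro r ⟨u, v, rfl⟩
      rcases eq_or_ne u v with rfl | huv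
      · simp only [sub_self, abs_zero, zero_div]
        have h1 : 0 ≤ M * β := mul_nonneg hM0 hβ0.le
        have h2 : 0 ≤ Lψ * (1 - β)/a := by
          apply div_nonneg (mul_nonneg hLψ0 (by linarith)) hapos.le
        linarith
      · have hd : (0:ℝ) < ‖u - v‖ := by rw [norm_pos_iff, sub_ne_zero]; exact huv
        rw [div_le_iff₀ hd]
        have h1 := hpair u v
        have h2 := hpair v u
        rw [abs_sub_le_iff]
        constructor
        · calc φ u - φ v ≤ M * β * ‖u - v‖ + Lψ * ‖u - v‖ * (1 - β)/a := h1
            _ = (M * β + Lψ * (1 - β)/a) * ‖u - v‖ := by field_simp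
        · have hvu : ‖v - u‖ = ‖u - v‖ := norm_sub_rev v u
          calc φ v - φ u ≤ M * β * ‖v - u‖ + Lψ * ‖v - u‖ * (1 - β)/a := h2
            _ = (M * β + Lψ * (1 - β)/a) * ‖u - v‖ := by rw [hvu]; field_simp
    -- from M ≤ Mβ + Lψ(1-β)/a deduce M a ≤ Lψ, then M c ≤ Cf
    have h1β : 0 < 1 - β := by linarith
    have hMa : M * a ≤ Lψ := by
      have h1 : M * (1 - β) ≤ Lψ * (1 - β)/a := by linarith
      have h2 : M ≤ Lψ / a := by
        have := (mul_le_mul_iff_left₀ h1β).1 (by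
          calc M * (1 - β) ≤ Lψ * (1 - β)/a := h1
            _ = Lψ / a * (1 - β) := by ring)
        exact this
      calc M * a = M * a := rfl
        _ ≤ Lψ / a * a := by
            apply mul_le_mul_of_nonneg_right h2 hapos.le
        _ = Lψ := by field_simp
    have h5 : M * c = M * a - M * Real.exp (ε * K) / ε := by rw [hceq]; ring
    have h6 : M * a ≤ Cf + M * Real.exp (ε * K) / ε := by rw [hLψdef] at hMa; exact hMa
    clear_value M a c
    linarith
  -- conclude via the converse mean value inequality
  have hDφM : ‖Dφ x₀‖ ≤ M := by
    have hLip : LipschitzWith M.toNNReal φ := by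
      apply LipschitzWith.of_dist_le_mul
      intro u v
      simpa [dist_eq_norm, Real.coe_toNNReal M hM0] using hφLip u v
    have := (hφgrad x₀).hasFDerivAt.le_of_lipschitz hLip
    simpa [Real.coe_toNNReal M hM0] using this
  calc ‖Dφ x₀‖ ≤ M := hDφM
    _ ≤ c⁻¹ * Cf := by
        rw [inv_mul_eq_div, le_div_iff₀ hcpos]
        exact hMle
end
end
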